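/- Proposition 9, MIPS part (difference of absolute biases of MIPS and CHIPS). In the joint finite setting with clusters and embeddings, assume the conditional mean reward q : X → C → A → E → ℝ is nonnegative and factors both through the embedding pair and through the cluster pair: there are qE : X → E → ℝ and q̄ : A → C → ℝ with q x c a e = qE x e = q̄ a c for all x, c, a, e. Then |Bias(ω_MIPS)| − |Bias(ω_CHIPS)| = Σ_x pX x · Σ_{e : p(e|x,π₀) = 0} p(e|x,π) · qE x e − Σ_c p(c) · Σ_{a : p(a|c,π₀) = 0} p(a|c,π) · q̄ a c, where ω_MIPS(x,c,a,e) = w(x,e), ω_CHIPS(x,c,a,e) = w(a,c), and Bias(ω) = Σ_{x,c,a,e} P₀(x,c,a,e) · ω(x,c,a,e) · q x c a e − V(π). -/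
import Mathlib


open Finset

namespace OPE

noncomputable section

variable {X C A E : Type*} [Fintype X] [Fintype C] [Fintype A] [Fintype E]
  [Nonempty X] [Nonempty C] [Nonempty A] [Nonempty E]

/-- Cluster marginal `p(c) = Σ_x pX x * pC x c`. -/
def pc (pX : X → ℝ) (pC : X → C → ℝ) (c : C) : ℝ :=
  ∑ x, pX x * pC x c

/-- Conditional context distribution `p(x|c)` (zero when `p(c) = 0`). -/
def pxc (pX : X → ℝ) (pC : X → C → ℝ) (x : X) (c : C) : ℝ :=
  pX x * pC x c / pc pX pC c

/-- `p(a|c,ρ) = Σ_x p(x|c) * ρ x a`. -/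
def pac (pX : X → ℝ) (pC : X → C → ℝ) (ρ : X → A → ℝ) (c : C) (a : A) : ℝ :=
  ∑ x, pxc pX pC x c * ρ x a

/-- Marginal embedding distribution `p(e|x,ρ) = Σ_a ρ x a * pE x a e`. -/
def pe (pE : X → A → E → ℝ) (ρ : X → A → ℝ) (x : X) (e : E) : ℝ :=
  ∑ a, ρ x a * pE x a e

/-- IPS weight `w(a,x) = π x a / π₀ x a` (with the convention `t/0 = 0`). -/
def wIPS (π π₀ : X → A → ℝ) (a : A) (x : X) : ℝ := π x a / π₀ x a

/-- CHIPS weight `w(a,c) = p(a|c,π) / p(a|c,π₀)` (with the convention `t/0 = 0`). -/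
def wCHIPS (pX : X → ℝ) (pC : X → C → ℝ) (π π₀ : X → A → ℝ) (a : A) (c : C) : ℝ :=
  pac pX pC π c a / pac pX pC π₀ c a

/-- MIPS weight `w(x,e) = p(e|x,π) / p(e|x,π₀)` (with the convention `t/0 = 0`). -/
def wMIPS (pE : X → A → E → ℝ) (π π₀ : X → A → ℝ) (x : X) (e : E) : ℝ :=
  pe pE π x e / pe pE π₀ x e

/-- Logging joint distribution `P₀(x,c,a,e)`. -/
def P0 (pX : X → ℝ) (pC : X → C → ℝ) (π₀ : X → A → ℝ) (pE : X → A → E → ℝ)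
    (x : X) (c : C) (a : A) (e : E) : ℝ :=
  pX x * pC x c * π₀ x a * pE x a e

/-- Policy value in the joint setting. -/
def V4 (pX : X → ℝ) (pC : X → C → ℝ) (π : X → A → ℝ) (pE : X → A → E → ℝ)
    (q : X → C → A → E → ℝ) : ℝ :=
  ∑ x, ∑ c, ∑ a, ∑ e, pX x * pC x c * π x a * pE x a e * q x c a e

/-- Single-sample mean of a weighted estimator in the joint setting. -/
def mu4 (pX : X → ℝ) (pC : X → C → ℝ) (π₀ : X → A → ℝ) (pE : X → A → E → ℝ)
    (q : X → C → A → E → ℝ) (ω : X → C → A → E → ℝ) : ℝ :=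
  ∑ x, ∑ c, ∑ a, ∑ e, P0 pX pC π₀ pE x c a e * ω x c a e * q x c a e

/-- Bias of a weighted estimator in the joint setting. -/
def bias4 (pX : X → ℝ) (pC : X → C → ℝ) (π π₀ : X → A → ℝ) (pE : X → A → E → ℝ)
    (q : X → C → A → E → ℝ) (ω : X → C → A → E → ℝ) : ℝ :=
  mu4 pX pC π₀ pE q ω - V4 pX pC π pE q

/-- Single-sample variance of a weighted estimator in the joint setting. -/
def var4 (pX : X → ℝ) (pC : X → C → ℝ) (π₀ : X → A → ℝ) (pE : X → A → E → ℝ)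
    (q m2 : X → C → A → E → ℝ) (ω : X → C → A → E → ℝ) : ℝ :=
  (∑ x, ∑ c, ∑ a, ∑ e, P0 pX pC π₀ pE x c a e * ω x c a e ^ 2 * m2 x c a e)
    - (mu4 pX pC π₀ pE q ω) ^ 2


lemma pe_nonneg' (pE : X → A → E → ℝ) (ρ : X → A → ℝ) (hρ : ∀ x a, 0 ≤ ρ x a)
    (hpE : ∀ x a e, 0 ≤ pE x a e) (x : X) (e : E) : 0 ≤ pe pE ρ x e :=
  Finset.sum_nonneg fun a _ => mul_nonneg (hρ x a) (hpE x a e)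

lemma pc_nonneg' (pX : X → ℝ) (pC : X → C → ℝ) (hpX0 : ∀ x, 0 ≤ pX x)
    (hpC0 : ∀ x c, 0 ≤ pC x c) (c : C) : 0 ≤ pc pX pC c :=
  Finset.sum_nonneg fun x _ => mul_nonneg (hpX0 x) (hpC0 x c)

lemma pac_nonneg' (pX : X → ℝ) (pC : X → C → ℝ) (ρ : X → A → ℝ)
    (hpX0 : ∀ x, 0 ≤ pX x) (hpC0 : ∀ x c, 0 ≤ pC x c) (hρ : ∀ x a, 0 ≤ ρ x a)
    (c : C) (a : A) : 0 ≤ pac pX pC ρ c a :=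
  Finset.sum_nonneg fun x _ => mul_nonneg
    (div_nonneg (mul_nonneg (hpX0 x) (hpC0 x c)) (pc_nonneg' pX pC hpX0 hpC0 c)) (hρ x a)

lemma base_mul' (pX : X → ℝ) (pC : X → C → ℝ) (hpX0 : ∀ x, 0 ≤ pX x)
    (hpC0 : ∀ x c, 0 ≤ pC x c) (x : X) (c : C) :
    pc pX pC c * pxc pX pC x c = pX x * pC x c := by
  by_cases h : pc pX pC c = 0
  · have hx : pX x * pC x c = 0 :=
      (Finset.sum_eq_zero_iff_of_nonneg
        (fun x _ => mul_nonneg (hpX0 x) (hpC0 x c))).mp h x (Finset.mem_univ x)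
    simp [pxc, h, hx]
  · rw [pxc, mul_comm, div_mul_cancel₀ _ h]

lemma sum_x_collapse' (pX : X → ℝ) (pC : X → C → ℝ) (ρ : X → A → ℝ)
    (hpX0 : ∀ x, 0 ≤ pX x) (hpC0 : ∀ x c, 0 ≤ pC x c) (c : C) (a : A) :
    ∑ x, pX x * pC x c * ρ x a = pc pX pC c * pac pX pC ρ c a := by
  rw [pac, Finset.mul_sum]
  exact Finset.sum_congr rfl fun x _ => by
    rw [← mul_assoc, base_mul' pX pC hpX0 hpC0]

lemma mips_collapse (pX : X → ℝ) (pC : X → C → ℝ) (ρ : X → A → ℝ)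
    (pE : X → A → E → ℝ) (hpC1 : ∀ x, ∑ c, pC x c = 1) (W : X → E → ℝ) :
    (∑ x, ∑ c, ∑ a, ∑ e, pX x * pC x c * ρ x a * pE x a e * W x e)
      = ∑ x, pX x * ∑ e, pe pE ρ x e * W x e := by
  refine Finset.sum_congr rfl fun x _ => ?_
  have inner : ∀ c, ∑ a, ∑ e, pX x * pC x c * ρ x a * pE x a e * W x e
      = pX x * pC x c * ∑ e, pe pE ρ x e * W x e := by
    intro c
    simp only [pe, Finset.sum_mul, Finset.mul_sum]
    rw [Finset.sum_comm]
    exact Finset.sum_congr rfl fun e _ => Finset.sum_congr rfl fun a _ => by ring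
  calc ∑ c, ∑ a, ∑ e, pX x * pC x c * ρ x a * pE x a e * W x e
      = ∑ c, pC x c * (pX x * ∑ e, pe pE ρ x e * W x e) := by
        refine Finset.sum_congr rfl fun c _ => ?_
        rw [inner c]; ring
    _ = pX x * ∑ e, pe pE ρ x e * W x e := by
        rw [← Finset.sum_mul, hpC1 x, one_mul]

lemma chips_collapse (pX : X → ℝ) (pC : X → C → ℝ) (ρ : X → A → ℝ)
    (pE : X → A → E → ℝ) (hpX0 : ∀ x, 0 ≤ pX x) (hpC0 : ∀ x c, 0 ≤ pC x c)
    (hpE1 : ∀ x a, ∑ e, pE x a e = 1) (W : A → C → ℝ) :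
    (∑ x, ∑ c, ∑ a, ∑ e, pX x * pC x c * ρ x a * pE x a e * W a c)
      = ∑ c, pc pX pC c * ∑ a, pac pX pC ρ c a * W a c := by
  have h1 : (∑ x, ∑ c, ∑ a, ∑ e, pX x * pC x c * ρ x a * pE x a e * W a c)
      = ∑ x, ∑ c, ∑ a, pX x * pC x c * ρ x a * W a c := by
    refine Finset.sum_congr rfl fun x _ => Finset.sum_congr rfl fun c _ =>
      Finset.sum_congr rfl fun a _ => ?_
    calc ∑ e, pX x * pC x c * ρ x a * pE x a e * W a c
        = ∑ e, (pX x * pC x c * ρ x a * W a c) * pE x a e :=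
          Finset.sum_congr rfl fun e _ => by ring
      _ = pX x * pC x c * ρ x a * W a c := by
          rw [← Finset.mul_sum, hpE1 x a, mul_one]
  rw [h1, Finset.sum_comm]
  refine Finset.sum_congr rfl fun c _ => ?_
  rw [Finset.sum_comm, Finset.mul_sum]
  refine Finset.sum_congr rfl fun a _ => ?_
  rw [show (∑ x, pX x * pC x c * ρ x a * W a c)
      = (∑ x, pX x * pC x c * ρ x a) * W a c from (Finset.sum_mul _ _ _).symm,
    sum_x_collapse' pX pC ρ hpX0 hpC0, mul_assoc]

/-- Proposition 9, MIPS part (difference of absolute biases of MIPS and CHIPS). -/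
theorem prop9_mips_minus_chips_abs_bias
    (pX : X → ℝ) (pC : X → C → ℝ) (π π₀ : X → A → ℝ) (pE : X → A → E → ℝ)
    (q : X → C → A → E → ℝ) (qE : X → E → ℝ) (qbar : A → C → ℝ)
    (hpX0 : ∀ x, 0 ≤ pX x) (hpX1 : ∑ x, pX x = 1)
    (hpC0 : ∀ x c, 0 ≤ pC x c) (hpC1 : ∀ x, ∑ c, pC x c = 1)
    (hπ : ∀ x a, 0 ≤ π x a) (hπ1 : ∀ x, ∑ a, π x a = 1)
    (hπ₀ : ∀ x a, 0 ≤ π₀ x a) (hπ₀1 : ∀ x, ∑ a, π₀ x a = 1)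
    (hpE0 : ∀ x a e, 0 ≤ pE x a e) (hpE1 : ∀ x a, ∑ e, pE x a e = 1)
    (hq0 : ∀ x c a e, 0 ≤ q x c a e)
    (hqE : ∀ x c a e, q x c a e = qE x e)
    (hqbar : ∀ x c a e, q x c a e = qbar a c) :
    |bias4 pX pC π π₀ pE q (fun x c a e => wMIPS pE π π₀ x e)|
      - |bias4 pX pC π π₀ pE q (fun x c a e => wCHIPS pX pC π π₀ a c)|
    = (∑ x, pX x * ∑ e,
        if pe pE π₀ x e = 0 then pe pE π x e * qE x e else 0)
      - (∑ c, pc pX pC c * ∑ a,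
        if pac pX pC π₀ c a = 0 then pac pX pC π c a * qbar a c else 0) := by
  have hqE' : ∀ x e, 0 ≤ qE x e := fun x e => by
    rw [← hqE x (Classical.arbitrary C) (Classical.arbitrary A) e]
    exact hq0 _ _ _ _
  have hqbar' : ∀ a c, 0 ≤ qbar a c := fun a c => by
    rw [← hqbar (Classical.arbitrary X) c a (Classical.arbitrary E)]
    exact hq0 _ _ _ _
  set SM : ℝ := ∑ x, pX x * ∑ e,
      if pe pE π₀ x e = 0 then pe pE π x e * qE x e else 0 with hSM
  set SC : ℝ := ∑ c, pc pX pC c * ∑ a,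
      if pac pX pC π₀ c a = 0 then pac pX pC π c a * qbar a c else 0 with hSC
  have hBM : bias4 pX pC π π₀ pE q (fun x c a e => wMIPS pE π π₀ x e) = -SM := by
    unfold bias4 mu4 V4 P0
    have hmu : (∑ x, ∑ c, ∑ a, ∑ e,
        pX x * pC x c * π₀ x a * pE x a e * wMIPS pE π π₀ x e * q x c a e)
        = ∑ x, pX x * ∑ e, pe pE π₀ x e * (wMIPS pE π π₀ x e * qE x e) := by
      rw [← mips_collapse pX pC π₀ pE hpC1 (fun x e => wMIPS pE π π₀ x e * qE x e)]
      exact Finset.sum_congr rfl fun x _ => Finset.sum_congr rfl fun c _ =>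
        Finset.sum_congr rfl fun a _ => Finset.sum_congr rfl fun e _ => by
          rw [hqE x c a e]; ring
    have hV : (∑ x, ∑ c, ∑ a, ∑ e, pX x * pC x c * π x a * pE x a e * q x c a e)
        = ∑ x, pX x * ∑ e, pe pE π x e * qE x e := by
      rw [← mips_collapse pX pC π pE hpC1 (fun x e => qE x e)]
      exact Finset.sum_congr rfl fun x _ => Finset.sum_congr rfl fun c _ =>
        Finset.sum_congr rfl fun a _ => Finset.sum_congr rfl fun e _ => by
          rw [hqE x c a e]
    rw [hmu, hV, hSM, ← Finset.sum_sub_distrib, ← Finset.sum_neg_distrib]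
    refine Finset.sum_congr rfl fun x _ => ?_
    rw [← mul_sub, ← mul_neg, ← Finset.sum_sub_distrib, ← Finset.sum_neg_distrib]
    refine congrArg _ (Finset.sum_congr rfl fun e _ => ?_)
    by_cases h : pe pE π₀ x e = 0
    · simp [wMIPS, h]
    · have : pe pE π₀ x e * (wMIPS pE π π₀ x e * qE x e)
          = pe pE π x e * qE x e := by
        rw [wMIPS]; field_simp
      rw [this]; simp [h]
  have hBC : bias4 pX pC π π₀ pE q (fun x c a e => wCHIPS pX pC π π₀ a c) = -SC := by
    unfold bias4 mu4 V4 P0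
    have hmu : (∑ x, ∑ c, ∑ a, ∑ e,
        pX x * pC x c * π₀ x a * pE x a e * wCHIPS pX pC π π₀ a c * q x c a e)
        = ∑ c, pc pX pC c * ∑ a,
            pac pX pC π₀ c a * (wCHIPS pX pC π π₀ a c * qbar a c) := by
      rw [← chips_collapse pX pC π₀ pE hpX0 hpC0 hpE1
        (fun a c => wCHIPS pX pC π π₀ a c * qbar a c)]
      exact Finset.sum_congr rfl fun x _ => Finset.sum_congr rfl fun c _ =>
        Finset.sum_congr rfl fun a _ => Finset.sum_congr rfl fun e _ => by
          rw [hqbar x c a e]; ring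
    have hV : (∑ x, ∑ c, ∑ a, ∑ e, pX x * pC x c * π x a * pE x a e * q x c a e)
        = ∑ c, pc pX pC c * ∑ a, pac pX pC π c a * qbar a c := by
      rw [← chips_collapse pX pC π pE hpX0 hpC0 hpE1 (fun a c => qbar a c)]
      exact Finset.sum_congr rfl fun x _ => Finset.sum_congr rfl fun c _ =>
        Finset.sum_congr rfl fun a _ => Finset.sum_congr rfl fun e _ => by
          rw [hqbar x c a e]
    rw [hmu, hV, hSC, ← Finset.sum_sub_distrib, ← Finset.sum_neg_distrib]
    refine Finset.sum_congr rfl fun c _ => ?_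
    rw [← mul_sub, ← mul_neg, ← Finset.sum_sub_distrib, ← Finset.sum_neg_distrib]
    refine congrArg _ (Finset.sum_congr rfl fun a _ => ?_)
    by_cases h : pac pX pC π₀ c a = 0
    · simp [wCHIPS, h]
    · have : pac pX pC π₀ c a * (wCHIPS pX pC π π₀ a c * qbar a c)
          = pac pX pC π c a * qbar a c := by
        rw [wCHIPS]; field_simp
      rw [this]; simp [h]
  have hSMnn : 0 ≤ SM := Finset.sum_nonneg fun x _ => mul_nonneg (hpX0 x)
    (Finset.sum_nonneg fun e _ => by
      split
      · exact mul_nonneg (pe_nonneg' pE π hπ hpE0 x e) (hqE' x e)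
      · exact le_refl 0)
  have hSCnn : 0 ≤ SC := Finset.sum_nonneg fun c _ =>
    mul_nonneg (pc_nonneg' pX pC hpX0 hpC0 c)
    (Finset.sum_nonneg fun a _ => by
      split
      · exact mul_nonneg (pac_nonneg' pX pC π hpX0 hpC0 hπ c a) (hqbar' a c)
      · exact le_refl 0)
  rw [hBM, hBC, abs_neg, abs_neg, abs_of_nonneg hSMnn, abs_of_nonneg hSCnn]

end

end OPE
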